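/- Let (Y, d_Y) be a finite metric space. Then there exist natural numbers d⁺, d⁻ and maps g⁺ : Y → ℝ^{d⁺}, g⁻ : Y → ℝ^{d⁻} such that for all x, y ∈ Y, ‖g⁺(x) − g⁺(y)‖² − ‖g⁻(x) − g⁻(y)‖² = d_Y(x, y)², where ‖·‖ denotes the Euclidean norm. That is, every finite metric space embeds isometrically (with no distortion of squared distances) into a pseudo-Euclidean space. -/

import Mathlib

open Matrix in
lemma herm_entry_sum {I : Type*} [Fintype I] [DecidableEq I] {M : Matrix I I ℝ}
    (hM : M.IsHermitian) (i j : I) :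
    M i j = ∑ k, hM.eigenvalues k * (hM.eigenvectorUnitary : Matrix I I ℝ) i k *
      (hM.eigenvectorUnitary : Matrix I I ℝ) j k := by
  conv_lhs => rw [hM.spectral_theorem]
  simp [Matrix.mul_apply, Matrix.diagonal, Finset.sum_comm, star]
  exact Finset.sum_congr rfl fun k _ => by ring

lemma eucl_norm_sq {m : ℕ} (v : EuclideanSpace ℝ (Fin m)) :
    ‖v‖ ^ 2 = ∑ i, (v i) ^ 2 := by
  rw [EuclideanSpace.norm_eq, Real.sq_sqrt (by positivity)]
  simp [Real.norm_eq_abs, sq_abs]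

lemma max_sub_max (a : ℝ) : max a 0 - max (-a) 0 = a := by
  rcases le_total a 0 with h | h
  · rw [max_eq_right h, max_eq_left (neg_nonneg.2 h)]; ring
  · rw [max_eq_left h, max_eq_right (neg_nonpos.2 h)]; ring


/-- Every finite metric space embeds isometrically (for squared
distances) into a pseudo-Euclidean space: there exist `d⁺, d⁻` and maps
`g⁺ : Y → ℝ^{d⁺}`, `g⁻ : Y → ℝ^{d⁻}` such that
`‖g⁺x - g⁺y‖² - ‖g⁻x - g⁻y‖² = d_Y(x,y)²` for all `x, y`. -/
theorem finite_metric_space_pseudo_euclidean_embedding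
    {Y : Type*} [MetricSpace Y] [Fintype Y] :
    ∃ (dp dm : ℕ) (gp : Y → EuclideanSpace ℝ (Fin dp)) (gm : Y → EuclideanSpace ℝ (Fin dm)),
      ∀ x y : Y, ‖gp x - gp y‖ ^ 2 - ‖gm x - gm y‖ ^ 2 = dist x y ^ 2 := by
  classical
  rcases isEmpty_or_nonempty Y with h | h
  · exact ⟨0, 0, fun _ => 0, fun _ => 0, fun x => (h.false x).elim⟩
  obtain ⟨y0⟩ := h
  set n := Fintype.card Y with hn
  set e : Y ≃ Fin n := Fintype.equivFin Y with he
  set M : Matrix Y Y ℝ :=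
    Matrix.of (fun x y => (dist x y0 ^ 2 + dist y y0 ^ 2 - dist x y ^ 2) / 2) with hMdef
  have hM : M.IsHermitian := by
    ext i j
    simp only [Matrix.conjTranspose_apply, hMdef, Matrix.of_apply, star]
    rw [dist_comm i j]
    ring
  set μ := hM.eigenvalues with hμ
  set U : Matrix Y Y ℝ := (hM.eigenvectorUnitary : Matrix Y Y ℝ) with hU
  refine ⟨n, n,
    fun x => (WithLp.toLp 2 (fun k => Real.sqrt (max (μ (e.symm k)) 0) * U x (e.symm k)) : EuclideanSpace ℝ (Fin n)),
    fun x => (WithLp.toLp 2 (fun k => Real.sqrt (max (-(μ (e.symm k))) 0) * U x (e.symm k)) : EuclideanSpace ℝ (Fin n)),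
    fun x y => ?_⟩
  rw [eucl_norm_sq, eucl_norm_sq]
  have key : ∀ (x y : Y) (s : Y → ℝ) (hs : ∀ k, 0 ≤ s k),
      (∑ k : Fin n, ((WithLp.toLp 2 (fun k => Real.sqrt (s (e.symm k)) * U x (e.symm k)) : EuclideanSpace ℝ (Fin n)) -
        WithLp.toLp 2 (fun k => Real.sqrt (s (e.symm k)) * U y (e.symm k))) k ^ 2)
      = ∑ k : Y, s k * (U x k - U y k) ^ 2 := by
    intro x y s hs
    rw [← Equiv.sum_comp e.symm (fun k => s k * (U x k - U y k) ^ 2)]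
    refine Finset.sum_congr rfl fun k _ => ?_
    have : ((WithLp.toLp 2 (fun k => Real.sqrt (s (e.symm k)) * U x (e.symm k)) : EuclideanSpace ℝ (Fin n)) -
        WithLp.toLp 2 (fun k => Real.sqrt (s (e.symm k)) * U y (e.symm k))) k
        = Real.sqrt (s (e.symm k)) * (U x (e.symm k) - U y (e.symm k)) := by
      simp [sub_eq_add_neg]; ring
    rw [this, mul_pow, Real.sq_sqrt (hs _)]
  rw [key x y (fun k => max (μ k) 0) (fun k => le_max_right _ _),
      key x y (fun k => max (-(μ k)) 0) (fun k => le_max_right _ _),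
      ← Finset.sum_sub_distrib]
  have step : ∑ k : Y, (max (μ k) 0 * (U x k - U y k) ^ 2 - max (-(μ k)) 0 * (U x k - U y k) ^ 2)
      = ∑ k : Y, μ k * (U x k - U y k) ^ 2 := by
    refine Finset.sum_congr rfl fun k _ => ?_
    rw [← sub_mul, max_sub_max]
  rw [step]
  have expand : ∑ k : Y, μ k * (U x k - U y k) ^ 2
      = M x x + M y y - 2 * M x y := by
    rw [herm_entry_sum hM x x, herm_entry_sum hM x y, herm_entry_sum hM y y,
        Finset.mul_sum, ← Finset.sum_add_distrib, ← Finset.sum_sub_distrib]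
    exact Finset.sum_congr rfl fun k _ => by ring
  rw [expand]
  simp only [hMdef, Matrix.of_apply]
  have : dist x x = 0 := dist_self x
  have : dist y y = 0 := dist_self y
  simp [dist_self]
  ring
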